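/- arXiv:1008.2969 — 2 statements merged into one kernel-verified Lean document; each statement's English description precedes it below -/
import Mathlib

section
/- Let J be a smooth almost complex structure on an open subset of ℝ^{2n}, let ρ be a C² real-valued function, and let u, v : Δ → ℝ^{2n} be two J-holomorphic discs with u(0) = v(0) = p and d₀u(∂/∂x) = d₀v(∂/∂x). Then Δ(ρ∘u)(0) = Δ(ρ∘v)(0); that is, the Laplacian of ρ composed with a J-holomorphic disc at the center depends only on the point p and the vector d₀u(∂/∂x) (it equals the Levi form 𝓛_Jρ(p, v)). -/
open Metric Set Filter Topology

noncomputable section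

/-- A `J`-holomorphic disc with values in `Ω ⊆ ℝ^{2n} ≅ ℂⁿ`. -/
def JDiscE {n : ℕ}
    (J : EuclideanSpace ℂ (Fin n) →
      (EuclideanSpace ℂ (Fin n) →L[ℝ] EuclideanSpace ℂ (Fin n)))
    (Ω : Set (EuclideanSpace ℂ (Fin n))) (u : ℂ → EuclideanSpace ℂ (Fin n)) : Prop :=
  Set.MapsTo u (Metric.ball 0 1) Ω ∧ ContDiffOn ℝ (⊤ : ℕ∞) u (Metric.ball 0 1) ∧
    ∀ ζ ∈ Metric.ball (0:ℂ) 1, fderiv ℝ u ζ Complex.I = J (u ζ) (fderiv ℝ u ζ 1)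

/-- The Laplacian of a real valued function on (an open subset of) `ℂ`. -/
noncomputable def lap (f : ℂ → ℝ) (ζ : ℂ) : ℝ :=
  fderiv ℝ (fun z => fderiv ℝ f z 1) ζ 1 +
    fderiv ℝ (fun z => fderiv ℝ f z Complex.I) ζ Complex.I

set_option maxHeartbeats 2000000 in
/-- Key computation: the Laplacian of `ρ ∘ u` at `0` is expressed purely in terms of
`u 0` and `fderiv ℝ u 0 1` (the Levi form). -/
theorem lap_center {n : ℕ}
    (Ω : Set (EuclideanSpace ℂ (Fin n))) (hΩ : IsOpen Ω)
    (J : EuclideanSpace ℂ (Fin n) →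
      (EuclideanSpace ℂ (Fin n) →L[ℝ] EuclideanSpace ℂ (Fin n)))
    (hJs : ContDiffOn ℝ (⊤ : ℕ∞) J Ω)
    (hJsq : ∀ z ∈ Ω, (J z).comp (J z) =
      -ContinuousLinearMap.id ℝ (EuclideanSpace ℂ (Fin n)))
    (ρ : EuclideanSpace ℂ (Fin n) → ℝ) (hρ : ContDiffOn ℝ 2 ρ Ω)
    (u : ℂ → EuclideanSpace ℂ (Fin n)) (hu : JDiscE J Ω u) :
    lap (fun ζ => ρ (u ζ)) 0 =
      fderiv ℝ (fderiv ℝ ρ) (u 0) (fderiv ℝ u 0 1) (fderiv ℝ u 0 1)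
      + fderiv ℝ (fderiv ℝ ρ) (u 0) (J (u 0) (fderiv ℝ u 0 1)) (J (u 0) (fderiv ℝ u 0 1))
      + fderiv ℝ ρ (u 0) (J (u 0) (fderiv ℝ J (u 0) (fderiv ℝ u 0 1) (fderiv ℝ u 0 1))
          + fderiv ℝ J (u 0) (J (u 0) (fderiv ℝ u 0 1)) (fderiv ℝ u 0 1)) := by
  obtain ⟨humaps, husm, hueq⟩ := hu
  have h0m : (0:ℂ) ∈ ball (0:ℂ) 1 := mem_ball_self one_pos
  have hqΩ : u 0 ∈ Ω := humaps h0m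
  have hball : ball (0:ℂ) 1 ∈ 𝓝 (0:ℂ) := isOpen_ball.mem_nhds h0m
  have hΩn : Ω ∈ 𝓝 (u 0) := hΩ.mem_nhds hqΩ
  -- differentiability of u on the ball
  have hud : ∀ z ∈ ball (0:ℂ) 1, DifferentiableAt ℝ u z := fun z hz =>
    (husm.contDiffAt (isOpen_ball.mem_nhds hz)).differentiableAt (by simp)
  set F : ℂ → (ℂ →L[ℝ] EuclideanSpace ℂ (Fin n)) := fderiv ℝ u with hFdef
  have hFsm : ContDiffOn ℝ (⊤ : ℕ∞) F (ball 0 1) :=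
    husm.fderiv_of_isOpen isOpen_ball (by exact_mod_cast le_top)
  have hF0 : DifferentiableAt ℝ F 0 :=
    (hFsm.contDiffAt hball).differentiableAt (by simp)
  set G : EuclideanSpace ℂ (Fin n) → (EuclideanSpace ℂ (Fin n) →L[ℝ] ℝ) := fderiv ℝ ρ
    with hGdef
  have hGsm : ContDiffOn ℝ 1 G Ω := hρ.fderiv_of_isOpen hΩ (by norm_num)
  have hGd : DifferentiableAt ℝ G (u 0) :=
    (hGsm.contDiffAt hΩn).differentiableAt one_ne_zero
  have hρd : ∀ x ∈ Ω, DifferentiableAt ℝ ρ x := fun x hx =>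
    (hρ.contDiffAt (hΩ.mem_nhds hx)).differentiableAt two_ne_zero
  have hJd : DifferentiableAt ℝ J (u 0) :=
    (hJs.contDiffAt hΩn).differentiableAt (by simp)
  set S : ℂ →L[ℝ] ℂ →L[ℝ] EuclideanSpace ℂ (Fin n) := fderiv ℝ F 0 with hSdef
  -- chain rule, as an eventual equality near 0
  have hchain : ∀ w : ℂ, (fun z => fderiv ℝ (fun ζ => ρ (u ζ)) z w)
      =ᶠ[𝓝 (0:ℂ)] (fun z => G (u z) (F z w)) := by
    intro w
    filter_upwards [hball] with z hz
    have h1 : DifferentiableAt ℝ u z := hud z hz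
    have h2 : DifferentiableAt ℝ ρ (u z) := hρd _ (humaps hz)
    have hcz : fderiv ℝ (fun ζ => ρ (u ζ)) z = (fderiv ℝ ρ (u z)).comp (fderiv ℝ u z) :=
      fderiv_comp z h2 h1
    rw [hcz]; rfl
  -- derivative of z ↦ F z w
  have hFw : ∀ w : ℂ, DifferentiableAt ℝ (fun z => F z w) 0 := fun w =>
    hF0.clm_apply (differentiableAt_const w)
  have hFwfd : ∀ w w' : ℂ, fderiv ℝ (fun z => F z w) 0 w' = S w' w := by
    intro w w'
    rw [fderiv_clm_apply hF0 (differentiableAt_const w)]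
    simp
    rfl
  -- derivative of z ↦ G (u z)
  have hGu : DifferentiableAt ℝ (fun z => G (u z)) 0 := hGd.comp 0 (hud 0 h0m)
  have hGufd : fderiv ℝ (fun z => G (u z)) 0 = (fderiv ℝ G (u 0)).comp (fderiv ℝ u 0) :=
    fderiv_comp 0 hGd (hud 0 h0m)
  -- derivative of z ↦ J (u z)
  have hJu : DifferentiableAt ℝ (fun z => J (u z)) 0 := hJd.comp 0 (hud 0 h0m)
  have hJufd : fderiv ℝ (fun z => J (u z)) 0 = (fderiv ℝ J (u 0)).comp (fderiv ℝ u 0) :=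
    fderiv_comp 0 hJd (hud 0 h0m)
  -- each term of the Laplacian
  have hlapterm : ∀ w : ℂ, fderiv ℝ (fun z => fderiv ℝ (fun ζ => ρ (u ζ)) z w) 0 w
      = fderiv ℝ G (u 0) (fderiv ℝ u 0 w) (F 0 w) + G (u 0) (S w w) := by
    intro w
    rw [(hchain w).fderiv_eq, fderiv_clm_apply hGu (hFw w)]
    simp only [ContinuousLinearMap.add_apply, ContinuousLinearMap.comp_apply,
      ContinuousLinearMap.flip_apply, hFwfd, hGufd]
    ring
  -- differentiate the J-holomorphy equation
  have heqev : (fun z => F z Complex.I) =ᶠ[𝓝 (0:ℂ)] (fun z => J (u z) (F z 1)) := by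
    filter_upwards [hball] with z hz using hueq z hz
  have hSrel : ∀ w : ℂ, S w Complex.I
      = J (u 0) (S w 1) + fderiv ℝ J (u 0) (fderiv ℝ u 0 w) (F 0 1) := by
    intro w
    calc S w Complex.I = fderiv ℝ (fun z => F z Complex.I) 0 w := (hFwfd Complex.I w).symm
      _ = fderiv ℝ (fun z => J (u z) (F z 1)) 0 w := by rw [heqev.fderiv_eq]
      _ = J (u 0) (S w 1) + fderiv ℝ J (u 0) (fderiv ℝ u 0 w) (F 0 1) := by
          rw [fderiv_clm_apply hJu (hFw 1)]
          simp only [ContinuousLinearMap.add_apply, ContinuousLinearMap.comp_apply,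
            ContinuousLinearMap.flip_apply, hFwfd, hJufd]
  -- symmetry of the second derivative
  have hsymm : S 1 Complex.I = S Complex.I 1 := by
    have hev : ∀ᶠ z in 𝓝 (0:ℂ), HasFDerivAt u (F z) z := by
      filter_upwards [hball] with z hz using (hud z hz).hasFDerivAt
    exact second_derivative_symmetric_of_eventually hev hF0.hasFDerivAt 1 Complex.I
  -- J² = -1 at u 0
  have hJsq0 : ∀ x, J (u 0) (J (u 0) x) = -x := by
    intro x
    have h := congrArg (fun (L : EuclideanSpace ℂ (Fin n) →L[ℝ] EuclideanSpace ℂ (Fin n)) => L x)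
      (hJsq (u 0) hqΩ)
    simpa using h
  have haI : fderiv ℝ u 0 Complex.I = J (u 0) (fderiv ℝ u 0 1) := hueq 0 h0m
  -- the trace of the second derivative of u is determined by the 1-jet
  have hSsum : S 1 1 + S Complex.I Complex.I
      = J (u 0) (fderiv ℝ J (u 0) (fderiv ℝ u 0 1) (fderiv ℝ u 0 1))
        + fderiv ℝ J (u 0) (J (u 0) (fderiv ℝ u 0 1)) (fderiv ℝ u 0 1) := by
    have h2 : S Complex.I Complex.I
        = J (u 0) (S Complex.I 1) + fderiv ℝ J (u 0) (fderiv ℝ u 0 Complex.I) (F 0 1) :=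
      hSrel Complex.I
    rw [← hsymm, hSrel 1, map_add, hJsq0, haI] at h2
    rw [h2]
    show S 1 1 + (-(S 1 1) + J (u 0) (fderiv ℝ J (u 0) (fderiv ℝ u 0 1) (F 0 1))
        + fderiv ℝ J (u 0) (J (u 0) (fderiv ℝ u 0 1)) (F 0 1)) = _
    have hF01 : F 0 1 = fderiv ℝ u 0 1 := rfl
    rw [hF01]
    abel
  -- assemble
  show fderiv ℝ (fun z => fderiv ℝ (fun ζ => ρ (u ζ)) z 1) 0 1 +
      fderiv ℝ (fun z => fderiv ℝ (fun ζ => ρ (u ζ)) z Complex.I) 0 Complex.I = _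
  rw [hlapterm 1, hlapterm Complex.I]
  have hF01 : F 0 1 = fderiv ℝ u 0 1 := rfl
  have hF0I : F 0 Complex.I = J (u 0) (fderiv ℝ u 0 1) := haI
  rw [hF01, hF0I]
  have : G (u 0) (S 1 1) + G (u 0) (S Complex.I Complex.I)
      = G (u 0) (S 1 1 + S Complex.I Complex.I) := (map_add _ _ _).symm
  rw [add_add_add_comm, this, hSsum]

/-- The Laplacian of `ρ ∘ u` at the center of a `J`-holomorphic disc depends
only on the center point and on `d₀u(∂/∂x)` (it is the Levi form of `ρ`). -/
theorem laplacian_center_depends_only_on_jet (n : ℕ)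
    (Ω : Set (EuclideanSpace ℂ (Fin n))) (hΩ : IsOpen Ω)
    (J : EuclideanSpace ℂ (Fin n) →
      (EuclideanSpace ℂ (Fin n) →L[ℝ] EuclideanSpace ℂ (Fin n)))
    (hJs : ContDiffOn ℝ (⊤ : ℕ∞) J Ω)
    (hJsq : ∀ z ∈ Ω, (J z).comp (J z) =
      -ContinuousLinearMap.id ℝ (EuclideanSpace ℂ (Fin n)))
    (ρ : EuclideanSpace ℂ (Fin n) → ℝ) (hρ : ContDiffOn ℝ 2 ρ Ω)
    (u v : ℂ → EuclideanSpace ℂ (Fin n))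
    (hu : JDiscE J Ω u) (hv : JDiscE J Ω v)
    (h0 : u 0 = v 0) (hd : fderiv ℝ u 0 1 = fderiv ℝ v 0 1) :
    lap (fun ζ => ρ (u ζ)) 0 = lap (fun ζ => ρ (v ζ)) 0 := by
  rw [lap_center Ω hΩ J hJs hJsq ρ hρ u hu, lap_center Ω hΩ J hJs hJsq ρ hρ v hv, h0, hd]

end
end

section
/- Let J be a smooth almost complex structure on an open subset of ℝ⁴ satisfying normal form (1), with block entries a₁, b₁, c₁, a₂, b₂, c₂. Let u = (u₁, u₂) be a J-holomorphic disc, let ζ₀ ∈ Δ, write z = u(ζ₀) and (X₁, Y₁, X₂, Y₂) = ∂u/∂x(ζ₀) in coordinates (x₁, y₁, x₂, y₂). Then the Laplacian of Re u₂ at ζ₀ (which equals the Levi form of Re z₂ at (z, v)) is: Δ(Re u₂)(ζ₀) = [(a₁−a₂)(z) ∂a₂/∂x₁(z) − c₂(z) ∂b₂/∂x₁(z) + c₁(z) ∂a₂/∂y₁(z)] X₁X₂ + [(a₁+a₂)(z) ∂b₂/∂x₁(z) − b₂(z) ∂a₂/∂x₁(z) + c₁(z) ∂b₂/∂y₁(z)]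 X₁Y₂ + [−(a₁+a₂)(z) ∂a₂/∂y₁(z) + b₁(z) ∂a₂/∂x₁(z) − c₂(z) ∂b₂/∂y₁(z)] Y₁X₂ + [(a₂−a₁)(z) ∂b₂/∂y₁(z) + b₁(z) ∂b₂/∂x₁(z) − b₂(z) ∂a₂/∂y₁(z)] Y₁Y₂ + [∂a₂/∂y₂(z) − ∂b₂/∂x₂(z)] (c₂(z) X₂² − 2a₂(z) X₂Y₂ − b₂(z) Y₂²). -/
open Metric Set

noncomputable section

abbrev C2 := ℂ × ℂ

noncomputable def mulI : ℂ →L[ℝ] ℂ := Complex.I • ContinuousLinearMap.id ℝ ℂ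

noncomputable def Jst : C2 →L[ℝ] C2 := mulI.prodMap mulI

/-- `u` is a `J`-holomorphic disc with values in `Ω`. -/
def JDisc (J : C2 → (C2 →L[ℝ] C2)) (Ω : Set C2) (u : ℂ → C2) : Prop :=
  Set.MapsTo u (Metric.ball 0 1) Ω ∧ ContDiffOn ℝ (⊤ : ℕ∞) u (Metric.ball 0 1) ∧
    ∀ ζ ∈ Metric.ball (0:ℂ) 1, fderiv ℝ u ζ Complex.I = J (u ζ) (fderiv ℝ u ζ 1)

/-- Submean-value subharmonicity. -/
def SubharmOn (f : ℂ → ℝ) (s : Set ℂ) : Prop :=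
  ContinuousOn f s ∧ ∀ c : ℂ, ∀ r : ℝ, 0 < r → Metric.closedBall c r ⊆ s →
    f c ≤ (2 * Real.pi)⁻¹ * ∫ θ in (0:ℝ)..(2 * Real.pi), f (c + r * Complex.exp (θ * Complex.I))

def JPsh (J : C2 → (C2 →L[ℝ] C2)) (φ : C2 → ℝ) (V : Set C2) : Prop :=
  ∀ u : ℂ → C2, JDisc J V u → SubharmOn (fun ζ => φ (u ζ)) (Metric.ball 0 1)

def IsNormalForm1 (J : C2 → (C2 →L[ℝ] C2)) (U : Set C2)
    (a₁ b₁ c₁ a₂ b₂ c₂ : C2 → ℝ) : Prop :=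
  ContDiffOn ℝ (⊤ : ℕ∞) a₁ U ∧ ContDiffOn ℝ (⊤ : ℕ∞) b₁ U ∧ ContDiffOn ℝ (⊤ : ℕ∞) c₁ U ∧
  ContDiffOn ℝ (⊤ : ℕ∞) a₂ U ∧ ContDiffOn ℝ (⊤ : ℕ∞) b₂ U ∧ ContDiffOn ℝ (⊤ : ℕ∞) c₂ U ∧
  (∀ z ∈ U, ∀ v : C2, J z v =
    ((↑(a₁ z * v.1.re + b₁ z * v.1.im) + ↑(c₁ z * v.1.re - a₁ z * v.1.im) * Complex.I,
      ↑(a₂ z * v.2.re + b₂ z * v.2.im) + ↑(c₂ z * v.2.re - a₂ z * v.2.im) * Complex.I) : C2)) ∧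
  ∃ C : ℝ, 0 ≤ C ∧ ∀ z ∈ U, ‖J z - Jst‖ ≤ C * ‖z.2‖

def NormalForm1 (J : C2 → (C2 →L[ℝ] C2)) (U : Set C2) : Prop :=
  ∃ a₁ b₁ c₁ a₂ b₂ c₂ : C2 → ℝ, IsNormalForm1 J U a₁ b₁ c₁ a₂ b₂ c₂

/-- A real-valued homogeneous polynomial of degree `2m` in `z, z̄`. -/
def IsHomPoly (H : ℂ → ℝ) (m : ℕ) : Prop :=
  ∃ c : Fin (2 * m + 1) → ℂ,
    ∀ z : ℂ, H z = (∑ j : Fin (2 * m + 1),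
      c j * z ^ (j : ℕ) * (starRingEnd ℂ z) ^ (2 * m - (j : ℕ))).re

/-- Normal form (2) for the defining function (with vanishing harmonic term `H̃`). -/
def NormalForm2 (ρ : C2 → ℝ) (m : ℕ) : Prop :=
  ∃ H : ℂ → ℝ, IsHomPoly H m ∧ SubharmOn H Set.univ ∧ (∃ w : ℂ, lap H w ≠ 0) ∧
    ∃ C : ℝ, 0 < C ∧ ∃ ε : ℝ, 0 < ε ∧ ∀ z : C2, ‖z.1‖ < ε → ‖z.2‖ < ε →
      |ρ z - (z.2.re + H z.1)| ≤
        C * (‖z.1‖ ^ (2 * m + 1) + ‖z.2‖ * ‖z.1‖ ^ m +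
          ‖z.2‖ ^ 2)

def vanishOrderAt {E : Type*} [NormedAddCommGroup E] [NormedSpace ℝ E]
    (f : ℂ → E) (n : ℕ) : Prop :=
  (∀ k < n, iteratedFDeriv ℝ k f 0 = 0) ∧ iteratedFDeriv ℝ n f 0 ≠ 0

/-- The set of ratios `δ₀(∂D,u)/δ(u)` entering the definition of the D'Angelo type. -/
def ratioSet (J : C2 → (C2 →L[ℝ] C2)) (Ω : Set C2) (ρ : C2 → ℝ) (q : C2) : Set ℝ :=
  { t | ∃ u : ℂ → C2, JDisc J Ω u ∧ u 0 = q ∧ (∃ ζ ∈ Metric.ball (0:ℂ) 1, u ζ ≠ q) ∧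
      ∃ d n : ℕ, vanishOrderAt (fun ζ => ρ (u ζ)) d ∧
        vanishOrderAt (fun ζ => u ζ - q) n ∧ t = (d : ℝ) / (n : ℝ) }

/-- The anisotropic polydisc `Q(0,δ)`. -/
def Qpoly (m : ℕ) (δ : ℝ) : Set C2 :=
  { z | ‖z.1‖ < δ ^ (1 / (2 * (m:ℝ))) ∧ ‖z.2‖ < δ }


private lemma expand_CLM (L : C2 →L[ℝ] ℝ) (v : C2) :
    L v = v.1.re * L ((1:ℂ), (0:ℂ)) + v.1.im * L ((Complex.I), (0:ℂ))
        + v.2.re * L ((0:ℂ), (1:ℂ)) + v.2.im * L ((0:ℂ), (Complex.I)) := by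
  have hv : v = v.1.re • ((1:ℂ), (0:ℂ)) + v.1.im • ((Complex.I:ℂ), (0:ℂ))
      + v.2.re • ((0:ℂ), (1:ℂ)) + v.2.im • ((0:ℂ), (Complex.I:ℂ)) := by
    apply Prod.ext <;> simp [Complex.ext_iff, Complex.real_smul]
  calc L v = L (v.1.re • ((1:ℂ), (0:ℂ)) + v.1.im • ((Complex.I:ℂ), (0:ℂ))
      + v.2.re • ((0:ℂ), (1:ℂ)) + v.2.im • ((0:ℂ), (Complex.I:ℂ))) := by rw [← hv]
    _ = _ := by simp only [map_add, map_smul, smul_eq_mul]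

private lemma two_le_top : (2 : WithTop ℕ∞) ≤ ((⊤:ℕ∞):WithTop ℕ∞) := by
  norm_cast

private lemma one_add_one_le_top : ((1:WithTop ℕ∞) + 1 : WithTop ℕ∞) ≤ ((⊤:ℕ∞):WithTop ℕ∞) := by
  norm_num
  exact two_le_top

private lemma schwarz {g : ℂ → ℝ} {x : ℂ} (hg : ContDiffAt ℝ ((⊤:ℕ∞):WithTop ℕ∞) g x) (a b : ℂ) :
    fderiv ℝ (fun z => fderiv ℝ g z a) x b = fderiv ℝ (fun z => fderiv ℝ g z b) x a := by
  have hsym := hg.isSymmSndFDerivAt (by rw [minSmoothness_of_isRCLikeNormedField]; exact two_le_top)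
  have hd : DifferentiableAt ℝ (fderiv ℝ g) x := by
    have := hg.fderiv_right (m := 1) one_add_one_le_top
    exact this.differentiableAt one_ne_zero
  have key : ∀ c : ℂ, fderiv ℝ (fun z => fderiv ℝ g z c) x =
      (fderiv ℝ (fderiv ℝ g) x).flip c := by
    intro c
    have := fderiv_clm_apply hd (differentiableAt_const c)
    simpa using this
  rw [key a, key b]
  exact hsym b a

private lemma fderiv_mul_pt {p q : ℂ → ℝ} {x : ℂ} (hp : DifferentiableAt ℝ p x)
    (hq : DifferentiableAt ℝ q x) (e : ℂ) :
    fderiv ℝ (fun ζ => p ζ * q ζ) x e = fderiv ℝ p x e * q x + p x * fderiv ℝ q x e := by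
  rw [fderiv_fun_mul hp hq]
  simp [smul_eq_mul]
  ring


/-- Explicit formula for the Laplacian of `Re u₂` along a `J`-holomorphic
disc (the Levi form of `Re z₂`) for a structure in normal form (1). -/
theorem levi_form_of_re_z2
    (Ω : Set C2) (hΩ : IsOpen Ω)
    (J : C2 → (C2 →L[ℝ] C2)) (hJs : ContDiffOn ℝ (⊤ : ℕ∞) J Ω)
    (hJsq : ∀ z ∈ Ω, (J z).comp (J z) = -ContinuousLinearMap.id ℝ C2)
    (a₁ b₁ c₁ a₂ b₂ c₂ : C2 → ℝ)
    (hNF : IsNormalForm1 J Ω a₁ b₁ c₁ a₂ b₂ c₂)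
    (u : ℂ → C2) (hu : JDisc J Ω u) (ζ₀ : ℂ) (hζ₀ : ζ₀ ∈ Metric.ball (0:ℂ) 1) :
    lap (fun t => ((u t).2).re) ζ₀ =
      ((a₁ (u ζ₀) - a₂ (u ζ₀)) * fderiv ℝ a₂ (u ζ₀) ((1:ℂ), (0:ℂ))
          - c₂ (u ζ₀) * fderiv ℝ b₂ (u ζ₀) ((1:ℂ), (0:ℂ))
          + c₁ (u ζ₀) * fderiv ℝ a₂ (u ζ₀) ((Complex.I), (0:ℂ)))
        * (fderiv ℝ u ζ₀ 1).1.re * (fderiv ℝ u ζ₀ 1).2.re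
      + ((a₁ (u ζ₀) + a₂ (u ζ₀)) * fderiv ℝ b₂ (u ζ₀) ((1:ℂ), (0:ℂ))
          - b₂ (u ζ₀) * fderiv ℝ a₂ (u ζ₀) ((1:ℂ), (0:ℂ))
          + c₁ (u ζ₀) * fderiv ℝ b₂ (u ζ₀) ((Complex.I), (0:ℂ)))
        * (fderiv ℝ u ζ₀ 1).1.re * (fderiv ℝ u ζ₀ 1).2.im
      + (-(a₁ (u ζ₀) + a₂ (u ζ₀)) * fderiv ℝ a₂ (u ζ₀) ((Complex.I), (0:ℂ))
          + b₁ (u ζ₀) * fderiv ℝ a₂ (u ζ₀) ((1:ℂ), (0:ℂ))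
          - c₂ (u ζ₀) * fderiv ℝ b₂ (u ζ₀) ((Complex.I), (0:ℂ)))
        * (fderiv ℝ u ζ₀ 1).1.im * (fderiv ℝ u ζ₀ 1).2.re
      + ((a₂ (u ζ₀) - a₁ (u ζ₀)) * fderiv ℝ b₂ (u ζ₀) ((Complex.I), (0:ℂ))
          + b₁ (u ζ₀) * fderiv ℝ b₂ (u ζ₀) ((1:ℂ), (0:ℂ))
          - b₂ (u ζ₀) * fderiv ℝ a₂ (u ζ₀) ((Complex.I), (0:ℂ)))
        * (fderiv ℝ u ζ₀ 1).1.im * (fderiv ℝ u ζ₀ 1).2.im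
      + (fderiv ℝ a₂ (u ζ₀) ((0:ℂ), (Complex.I))
          - fderiv ℝ b₂ (u ζ₀) ((0:ℂ), (1:ℂ)))
        * (c₂ (u ζ₀) * (fderiv ℝ u ζ₀ 1).2.re ^ 2
          - 2 * a₂ (u ζ₀) * (fderiv ℝ u ζ₀ 1).2.re * (fderiv ℝ u ζ₀ 1).2.im
          - b₂ (u ζ₀) * (fderiv ℝ u ζ₀ 1).2.im ^ 2) := by
  obtain ⟨hmap, husm, hCR⟩ := hu
  obtain ⟨ha₁, hb₁, hc₁, ha₂, hb₂, hc₂, hform, -⟩ := hNF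
  have hball : Metric.ball (0:ℂ) 1 ∈ nhds ζ₀ := isOpen_ball.mem_nhds hζ₀
  have hzΩ : u ζ₀ ∈ Ω := hmap hζ₀
  have hΩz : Ω ∈ nhds (u ζ₀) := hΩ.mem_nhds hzΩ
  -- smoothness of u at points of the ball
  have huC : ∀ ζ ∈ Metric.ball (0:ℂ) 1, ContDiffAt ℝ ((⊤:ℕ∞):WithTop ℕ∞) u ζ :=
    fun ζ hζ => husm.contDiffAt (isOpen_ball.mem_nhds hζ)
  have hud : ∀ ζ ∈ Metric.ball (0:ℂ) 1, DifferentiableAt ℝ u ζ :=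
    fun ζ hζ => (huC ζ hζ).differentiableAt (by norm_cast)
  -- the projections
  set π₁ : C2 →L[ℝ] ℝ := Complex.reCLM.comp ((ContinuousLinearMap.snd ℝ ℂ ℂ)) with hπ₁
  set π₂ : C2 →L[ℝ] ℝ := Complex.imCLM.comp ((ContinuousLinearMap.snd ℝ ℂ ℂ)) with hπ₂
  have hf₁d : ∀ ζ ∈ Metric.ball (0:ℂ) 1, ∀ e : ℂ,
      fderiv ℝ (fun t => ((u t).2).re) ζ e = (fderiv ℝ u ζ e).2.re := by
    intro ζ hζ e
    have : fderiv ℝ (fun t => π₁ (u t)) ζ = π₁.comp (fderiv ℝ u ζ) :=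
      (π₁.hasFDerivAt.comp ζ (hud ζ hζ).hasFDerivAt).fderiv
    have h2 : fderiv ℝ (fun t => ((u t).2).re) ζ = π₁.comp (fderiv ℝ u ζ) := this
    rw [h2]; rfl
  have hf₂d : ∀ ζ ∈ Metric.ball (0:ℂ) 1, ∀ e : ℂ,
      fderiv ℝ (fun t => ((u t).2).im) ζ e = (fderiv ℝ u ζ e).2.im := by
    intro ζ hζ e
    have : fderiv ℝ (fun t => π₂ (u t)) ζ = π₂.comp (fderiv ℝ u ζ) :=
      (π₂.hasFDerivAt.comp ζ (hud ζ hζ).hasFDerivAt).fderiv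
    have h2 : fderiv ℝ (fun t => ((u t).2).im) ζ = π₂.comp (fderiv ℝ u ζ) := this
    rw [h2]; rfl
  -- derivative component functions
  set F1 : ℂ → ℝ := fun ζ => (fderiv ℝ u ζ 1).2.re with hF1
  set F2 : ℂ → ℝ := fun ζ => (fderiv ℝ u ζ 1).2.im with hF2
  set G1 : ℂ → ℝ := fun ζ => (fderiv ℝ u ζ Complex.I).2.re with hG1
  set G2 : ℂ → ℝ := fun ζ => (fderiv ℝ u ζ Complex.I).2.im with hG2
  -- the Cauchy–Riemann relations for the second components
  have hCR2 : ∀ ζ ∈ Metric.ball (0:ℂ) 1,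
      G1 ζ = a₂ (u ζ) * F1 ζ + b₂ (u ζ) * F2 ζ ∧
      G2 ζ = c₂ (u ζ) * F1 ζ - a₂ (u ζ) * F2 ζ := by
    intro ζ hζ
    have h := hCR ζ hζ
    rw [hform (u ζ) (hmap hζ)] at h
    constructor <;> (simp only [hF1, hF2, hG1, hG2]; rw [h]; simp)
  -- differentiability of the derivative components at points of the ball
  have hvd : ∀ ζ ∈ Metric.ball (0:ℂ) 1, ∀ e : ℂ,
      DifferentiableAt ℝ (fun t => fderiv ℝ u t e) ζ := by
    intro ζ hζ e
    have h1 : ContDiffAt ℝ 1 (fderiv ℝ u) ζ :=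
      (huC ζ hζ).fderiv_right (m := 1) (by norm_cast)
    exact (h1.differentiableAt one_ne_zero).clm_apply (differentiableAt_const e)
  have hF1d : DifferentiableAt ℝ F1 ζ₀ :=
    π₁.differentiableAt.comp ζ₀ (hvd ζ₀ hζ₀ 1)
  have hF2d : DifferentiableAt ℝ F2 ζ₀ :=
    π₂.differentiableAt.comp ζ₀ (hvd ζ₀ hζ₀ 1)
  -- differentiability and chain rule for coefficient functions composed with u
  have hchain : ∀ φ : C2 → ℝ, ContDiffOn ℝ (⊤:ℕ∞) φ Ω →
      DifferentiableAt ℝ (fun ζ => φ (u ζ)) ζ₀ ∧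
      ∀ e : ℂ, fderiv ℝ (fun ζ => φ (u ζ)) ζ₀ e = fderiv ℝ φ (u ζ₀) (fderiv ℝ u ζ₀ e) := by
    intro φ hφ
    have hφd : DifferentiableAt ℝ φ (u ζ₀) :=
      (hφ.contDiffAt hΩz).differentiableAt (by norm_cast)
    have hcomp : DifferentiableAt ℝ (fun ζ => φ (u ζ)) ζ₀ :=
      hφd.comp ζ₀ (hud ζ₀ hζ₀)
    refine ⟨hcomp, fun e => ?_⟩
    have : fderiv ℝ (φ ∘ u) ζ₀ = (fderiv ℝ φ (u ζ₀)).comp (fderiv ℝ u ζ₀) :=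
      fderiv_comp ζ₀ hφd (hud ζ₀ hζ₀)
    have h2 : fderiv ℝ (fun ζ => φ (u ζ)) ζ₀ = (fderiv ℝ φ (u ζ₀)).comp (fderiv ℝ u ζ₀) := this
    rw [h2]; rfl
  -- pointwise identity  a₂² + b₂ c₂ = −1
  have hsq : ∀ ζ ∈ Metric.ball (0:ℂ) 1,
      a₂ (u ζ) * a₂ (u ζ) + b₂ (u ζ) * c₂ (u ζ) = -1 := by
    intro ζ hζ
    have h := ContinuousLinearMap.ext_iff.mp (hJsq (u ζ) (hmap hζ)) ((0:ℂ),(1:ℂ))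
    rw [ContinuousLinearMap.comp_apply, hform (u ζ) (hmap hζ) ((0:ℂ),(1:ℂ)),
      hform (u ζ) (hmap hζ)] at h
    have h2 := congrArg (fun w : C2 => w.2.re) h
    simp [Complex.ext_iff] at h2
    linarith [h2]
  -- smoothness of the scalar component functions
  have hf₁C : ContDiffAt ℝ ((⊤:ℕ∞):WithTop ℕ∞) (fun t => ((u t).2).re) ζ₀ := by
    have := ContDiffAt.comp (g := fun w : C2 => π₁ w) ζ₀ π₁.contDiff.contDiffAt (huC ζ₀ hζ₀)
    exact this
  have hf₂C : ContDiffAt ℝ ((⊤:ℕ∞):WithTop ℕ∞) (fun t => ((u t).2).im) ζ₀ := by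
    have := ContDiffAt.comp (g := fun w : C2 => π₂ w) ζ₀ π₂.contDiff.contDiffAt (huC ζ₀ hζ₀)
    exact this
  -- eventual equalities
  have hEvF1 : (fun ζ => fderiv ℝ (fun t => ((u t).2).re) ζ 1) =ᶠ[nhds ζ₀] F1 := by
    filter_upwards [hball] with ζ hζ
    exact hf₁d ζ hζ 1
  have hEvG1 : (fun ζ => fderiv ℝ (fun t => ((u t).2).re) ζ Complex.I) =ᶠ[nhds ζ₀] G1 := by
    filter_upwards [hball] with ζ hζ
    exact hf₁d ζ hζ Complex.I
  have hEvF2 : (fun ζ => fderiv ℝ (fun t => ((u t).2).im) ζ 1) =ᶠ[nhds ζ₀] F2 := by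
    filter_upwards [hball] with ζ hζ
    exact hf₂d ζ hζ 1
  have hEvG2 : (fun ζ => fderiv ℝ (fun t => ((u t).2).im) ζ Complex.I) =ᶠ[nhds ζ₀] G2 := by
    filter_upwards [hball] with ζ hζ
    exact hf₂d ζ hζ Complex.I
  -- Schwarz symmetry
  have hS1 : fderiv ℝ F1 ζ₀ Complex.I = fderiv ℝ G1 ζ₀ 1 := by
    rw [← hEvF1.fderiv_eq, ← hEvG1.fderiv_eq]
    exact schwarz hf₁C 1 Complex.I
  have hS2 : fderiv ℝ F2 ζ₀ Complex.I = fderiv ℝ G2 ζ₀ 1 := by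
    rw [← hEvF2.fderiv_eq, ← hEvG2.fderiv_eq]
    exact schwarz hf₂C 1 Complex.I
  -- derivative of G1, G2 via the product rule
  have hEvG1P : G1 =ᶠ[nhds ζ₀] fun ζ => a₂ (u ζ) * F1 ζ + b₂ (u ζ) * F2 ζ := by
    filter_upwards [hball] with ζ hζ
    exact (hCR2 ζ hζ).1
  have hEvG2P : G2 =ᶠ[nhds ζ₀] fun ζ => c₂ (u ζ) * F1 ζ - a₂ (u ζ) * F2 ζ := by
    filter_upwards [hball] with ζ hζ
    exact (hCR2 ζ hζ).2
  have hGd1 : ∀ e : ℂ, fderiv ℝ G1 ζ₀ e =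
      fderiv ℝ (fun ζ => a₂ (u ζ)) ζ₀ e * F1 ζ₀ + a₂ (u ζ₀) * fderiv ℝ F1 ζ₀ e
      + (fderiv ℝ (fun ζ => b₂ (u ζ)) ζ₀ e * F2 ζ₀ + b₂ (u ζ₀) * fderiv ℝ F2 ζ₀ e) := by
    intro e
    rw [hEvG1P.fderiv_eq,
      fderiv_fun_add ((hchain a₂ ha₂).1.fun_mul hF1d) ((hchain b₂ hb₂).1.fun_mul hF2d)]
    simp only [ContinuousLinearMap.add_apply]
    rw [fderiv_mul_pt (hchain a₂ ha₂).1 hF1d, fderiv_mul_pt (hchain b₂ hb₂).1 hF2d]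
  have hGd2 : ∀ e : ℂ, fderiv ℝ G2 ζ₀ e =
      fderiv ℝ (fun ζ => c₂ (u ζ)) ζ₀ e * F1 ζ₀ + c₂ (u ζ₀) * fderiv ℝ F1 ζ₀ e
      - (fderiv ℝ (fun ζ => a₂ (u ζ)) ζ₀ e * F2 ζ₀ + a₂ (u ζ₀) * fderiv ℝ F2 ζ₀ e) := by
    intro e
    rw [hEvG2P.fderiv_eq,
      fderiv_fun_sub ((hchain c₂ hc₂).1.fun_mul hF1d) ((hchain a₂ ha₂).1.fun_mul hF2d)]
    simp only [ContinuousLinearMap.sub_apply]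
    rw [fderiv_mul_pt (hchain c₂ hc₂).1 hF1d, fderiv_mul_pt (hchain a₂ ha₂).1 hF2d]
  -- derivative of the identity a₂(u)² + b₂(u) c₂(u) = −1
  have hrel : fderiv ℝ (fun ζ => a₂ (u ζ)) ζ₀ 1 * a₂ (u ζ₀) + a₂ (u ζ₀) * fderiv ℝ (fun ζ => a₂ (u ζ)) ζ₀ 1
      + (fderiv ℝ (fun ζ => b₂ (u ζ)) ζ₀ 1 * c₂ (u ζ₀) + b₂ (u ζ₀) * fderiv ℝ (fun ζ => c₂ (u ζ)) ζ₀ 1) = 0 := by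
    have hEvC : (fun ζ => a₂ (u ζ) * a₂ (u ζ) + b₂ (u ζ) * c₂ (u ζ)) =ᶠ[nhds ζ₀]
        (fun _ => (-1:ℝ)) := by
      filter_upwards [hball] with ζ hζ
      exact hsq ζ hζ
    have h0 : fderiv ℝ (fun ζ => a₂ (u ζ) * a₂ (u ζ) + b₂ (u ζ) * c₂ (u ζ)) ζ₀ 1 = 0 := by
      rw [hEvC.fderiv_eq, fderiv_fun_const]
      simp
    rw [fderiv_fun_add ((hchain a₂ ha₂).1.fun_mul (hchain a₂ ha₂).1)
      ((hchain b₂ hb₂).1.fun_mul (hchain c₂ hc₂).1)] at h0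
    simp only [ContinuousLinearMap.add_apply] at h0
    rw [fderiv_mul_pt (hchain a₂ ha₂).1 (hchain a₂ ha₂).1,
      fderiv_mul_pt (hchain b₂ hb₂).1 (hchain c₂ hc₂).1] at h0
    exact h0
  -- components of ∂u/∂y at ζ₀
  have hw := hCR ζ₀ hζ₀
  rw [hform (u ζ₀) hzΩ] at hw
  have hw1re : ((fderiv ℝ u ζ₀) Complex.I).1.re =
      a₁ (u ζ₀) * ((fderiv ℝ u ζ₀) 1).1.re + b₁ (u ζ₀) * ((fderiv ℝ u ζ₀) 1).1.im := by
    rw [hw]; simp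
  have hw1im : ((fderiv ℝ u ζ₀) Complex.I).1.im =
      c₁ (u ζ₀) * ((fderiv ℝ u ζ₀) 1).1.re - a₁ (u ζ₀) * ((fderiv ℝ u ζ₀) 1).1.im := by
    rw [hw]; simp
  have hw2re : ((fderiv ℝ u ζ₀) Complex.I).2.re =
      a₂ (u ζ₀) * ((fderiv ℝ u ζ₀) 1).2.re + b₂ (u ζ₀) * ((fderiv ℝ u ζ₀) 1).2.im := by
    rw [hw]; simp
  have hw2im : ((fderiv ℝ u ζ₀) Complex.I).2.im =
      c₂ (u ζ₀) * ((fderiv ℝ u ζ₀) 1).2.re - a₂ (u ζ₀) * ((fderiv ℝ u ζ₀) 1).2.im := by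
    rw [hw]; simp
  -- first-order expansions of the coefficient functions along u
  have hα : fderiv ℝ (fun ζ => a₂ (u ζ)) ζ₀ 1 =
      ((fderiv ℝ u ζ₀) 1).1.re * fderiv ℝ a₂ (u ζ₀) ((1:ℂ),(0:ℂ))
      + ((fderiv ℝ u ζ₀) 1).1.im * fderiv ℝ a₂ (u ζ₀) ((Complex.I),(0:ℂ))
      + ((fderiv ℝ u ζ₀) 1).2.re * fderiv ℝ a₂ (u ζ₀) ((0:ℂ),(1:ℂ))
      + ((fderiv ℝ u ζ₀) 1).2.im * fderiv ℝ a₂ (u ζ₀) ((0:ℂ),(Complex.I)) := by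
    rw [(hchain a₂ ha₂).2 1, expand_CLM]
  have hβ : fderiv ℝ (fun ζ => b₂ (u ζ)) ζ₀ 1 =
      ((fderiv ℝ u ζ₀) 1).1.re * fderiv ℝ b₂ (u ζ₀) ((1:ℂ),(0:ℂ))
      + ((fderiv ℝ u ζ₀) 1).1.im * fderiv ℝ b₂ (u ζ₀) ((Complex.I),(0:ℂ))
      + ((fderiv ℝ u ζ₀) 1).2.re * fderiv ℝ b₂ (u ζ₀) ((0:ℂ),(1:ℂ))
      + ((fderiv ℝ u ζ₀) 1).2.im * fderiv ℝ b₂ (u ζ₀) ((0:ℂ),(Complex.I)) := by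
    rw [(hchain b₂ hb₂).2 1, expand_CLM]
  have hγ : fderiv ℝ (fun ζ => c₂ (u ζ)) ζ₀ 1 =
      ((fderiv ℝ u ζ₀) 1).1.re * fderiv ℝ c₂ (u ζ₀) ((1:ℂ),(0:ℂ))
      + ((fderiv ℝ u ζ₀) 1).1.im * fderiv ℝ c₂ (u ζ₀) ((Complex.I),(0:ℂ))
      + ((fderiv ℝ u ζ₀) 1).2.re * fderiv ℝ c₂ (u ζ₀) ((0:ℂ),(1:ℂ))
      + ((fderiv ℝ u ζ₀) 1).2.im * fderiv ℝ c₂ (u ζ₀) ((0:ℂ),(Complex.I)) := by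
    rw [(hchain c₂ hc₂).2 1, expand_CLM]
  have hα' : fderiv ℝ (fun ζ => a₂ (u ζ)) ζ₀ Complex.I =
      (a₁ (u ζ₀) * ((fderiv ℝ u ζ₀) 1).1.re + b₁ (u ζ₀) * ((fderiv ℝ u ζ₀) 1).1.im)
        * fderiv ℝ a₂ (u ζ₀) ((1:ℂ),(0:ℂ))
      + (c₁ (u ζ₀) * ((fderiv ℝ u ζ₀) 1).1.re - a₁ (u ζ₀) * ((fderiv ℝ u ζ₀) 1).1.im)
        * fderiv ℝ a₂ (u ζ₀) ((Complex.I),(0:ℂ))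
      + (a₂ (u ζ₀) * ((fderiv ℝ u ζ₀) 1).2.re + b₂ (u ζ₀) * ((fderiv ℝ u ζ₀) 1).2.im)
        * fderiv ℝ a₂ (u ζ₀) ((0:ℂ),(1:ℂ))
      + (c₂ (u ζ₀) * ((fderiv ℝ u ζ₀) 1).2.re - a₂ (u ζ₀) * ((fderiv ℝ u ζ₀) 1).2.im)
        * fderiv ℝ a₂ (u ζ₀) ((0:ℂ),(Complex.I)) := by
    rw [(hchain a₂ ha₂).2 Complex.I, expand_CLM, hw1re, hw1im, hw2re, hw2im]
  have hβ' : fderiv ℝ (fun ζ => b₂ (u ζ)) ζ₀ Complex.I =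
      (a₁ (u ζ₀) * ((fderiv ℝ u ζ₀) 1).1.re + b₁ (u ζ₀) * ((fderiv ℝ u ζ₀) 1).1.im)
        * fderiv ℝ b₂ (u ζ₀) ((1:ℂ),(0:ℂ))
      + (c₁ (u ζ₀) * ((fderiv ℝ u ζ₀) 1).1.re - a₁ (u ζ₀) * ((fderiv ℝ u ζ₀) 1).1.im)
        * fderiv ℝ b₂ (u ζ₀) ((Complex.I),(0:ℂ))
      + (a₂ (u ζ₀) * ((fderiv ℝ u ζ₀) 1).2.re + b₂ (u ζ₀) * ((fderiv ℝ u ζ₀) 1).2.im)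
        * fderiv ℝ b₂ (u ζ₀) ((0:ℂ),(1:ℂ))
      + (c₂ (u ζ₀) * ((fderiv ℝ u ζ₀) 1).2.re - a₂ (u ζ₀) * ((fderiv ℝ u ζ₀) 1).2.im)
        * fderiv ℝ b₂ (u ζ₀) ((0:ℂ),(Complex.I)) := by
    rw [(hchain b₂ hb₂).2 Complex.I, expand_CLM, hw1re, hw1im, hw2re, hw2im]
  have hsqz := hsq ζ₀ hζ₀
  -- reduce the Laplacian
  have hL : lap (fun t => ((u t).2).re) ζ₀ = fderiv ℝ F1 ζ₀ 1 + fderiv ℝ G1 ζ₀ Complex.I := by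
    rw [lap, hEvF1.fderiv_eq, hEvG1.fderiv_eq]
  have hX2 : ((fderiv ℝ u ζ₀) 1).2.re = F1 ζ₀ := by rw [hF1]
  have hY2 : ((fderiv ℝ u ζ₀) 1).2.im = F2 ζ₀ := by rw [hF2]
  rw [hX2, hY2] at hα hβ hγ hα' hβ'
  rw [hα, hβ, hγ] at hrel
  rw [hL, hGd1 Complex.I, hS1, hS2, hGd1 1, hGd2 1, hα, hβ, hγ, hα', hβ']
  rw [hX2, hY2]
  linear_combination (fderiv ℝ F1 ζ₀ 1) * hsqz + (F1 ζ₀) * hrel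


end
end
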